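/- Let S ∈ Σ^m and let a, a' ∈ Σ^m satisfy rep_{subcl(S)}(a) = rep_{subcl(S)}(a'). Then f_BDM(a) = f_BDM(a') and g_BDM(a) = g_BDM(a'). -/

import Mathlib

/-- The longest suffix of `a` satisfying `p` (default `[]` if no suffix satisfies `p`). -/
def longestSuffixP {A : Type*} (p : List A → Prop) [DecidablePred p] (a : List A) : List A :=
  (a.tails.filter fun t => decide (p t)).headD []

/-- `rep_{subcl(S)}(a)`: the longest suffix of `a` lying in `subcl(S)`, the set of all
contiguous substrings of `S` (including the empty string), i.e. the longest suffix of `a`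
that is an infix of `S`. -/
def repSub {A : Type*} [DecidableEq A] (S : List A) (a : List A) : List A :=
  longestSuffixP (· <:+: S) a

/-- `j^S_w`: the largest `j ∈ {0,…,m}` such that the length-`j` suffix `w_{m−j}…w_{m−1}`
of `w` is a contiguous substring (infix) of `S`; the empty string counts. -/
noncomputable def jBDM {A : Type*} [DecidableEq A] (S : List A) (m : ℕ) (w : List A) : ℕ :=
  sSup {j : ℕ | j ≤ m ∧ w.drop (m - j) <:+: S}

open scoped Classical in
/-- `f_BDM(w)`: `m` if `w = S`, and `j^S_w + 1` otherwise. -/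
noncomputable def fBDM {A : Type*} [DecidableEq A] (S : List A) (m : ℕ) (w : List A) : ℕ :=
  if w = S then m else jBDM S m w + 1

/-- `I^S(w)`: the set of `i ∈ {0,…,m−1}` such that the length-`i` suffix `w_{m−i}…w_{m−1}`
of `w` is a prefix of `S`; the empty string counts. -/
def IBDM {A : Type*} (S : List A) (m : ℕ) (w : List A) : Set ℕ :=
  {i : ℕ | i < m ∧ w.drop (m - i) <+: S}

/-- `g_BDM(w) = min{ m−i : i ∈ I^S(w) }`. -/
noncomputable def gBDM {A : Type*} (S : List A) (m : ℕ) (w : List A) : ℕ :=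
  sInf {d : ℕ | ∃ i ∈ IBDM S m w, d = m - i}

lemma longestSuffixP_spec {A : Type*} (p : List A → Prop) [DecidablePred p] (a : List A)
    (hp : p []) : longestSuffixP p a <:+ a ∧ p (longestSuffixP p a) := by
  have hmem : [] ∈ a.tails.filter fun t => decide (p t) := by
    rw [List.mem_filter]
    exact ⟨List.mem_tails _ _ |>.mpr List.nil_suffix, by simpa using hp⟩
  have hmem2 : longestSuffixP p a ∈ a.tails.filter fun t => decide (p t) := by
    unfold longestSuffixP
    cases h : a.tails.filter fun t => decide (p t) with
    | nil => rw [h] at hmem; exact absurd hmem List.not_mem_nil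
    | cons x xs => simp
  rw [List.mem_filter] at hmem2
  exact ⟨List.mem_tails _ _ |>.mp hmem2.1, by simpa using hmem2.2⟩

lemma suffix_longestSuffixP {A : Type*} (p : List A → Prop) [DecidablePred p] :
    ∀ (a t : List A), t <:+ a → p t → t <:+ longestSuffixP p a := by
  intro a
  induction a with
  | nil => intro t ht _; rw [List.suffix_nil] at ht; subst ht; exact List.nil_suffix
  | cons x xs ih =>
    intro t ht hpt
    unfold longestSuffixP
    rw [List.tails_cons, List.filter_cons]
    by_cases h : p (x :: xs)
    · simpa [h] using ht
    · simp only [h, decide_false, Bool.false_eq_true, if_false]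
      rcases List.suffix_cons_iff.mp ht with h1 | h2
      · exact absurd (h1 ▸ hpt) h
      · exact ih t h2 hpt

lemma suffix_drop_eq {A : Type*} {t l : List A} (h : t <:+ l) :
    l.drop (l.length - t.length) = t := by
  obtain ⟨s, rfl⟩ := h
  simp [List.drop_left]

lemma suffix_eq_of_length {A : Type*} {t₁ t₂ l : List A} (h₁ : t₁ <:+ l) (h₂ : t₂ <:+ l)
    (hlen : t₁.length = t₂.length) : t₁ = t₂ := by
  rw [← suffix_drop_eq h₁, ← suffix_drop_eq h₂, hlen]

lemma repSub_suffix {A : Type*} [DecidableEq A] (S a : List A) : repSub S a <:+ a :=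
  (longestSuffixP_spec (p := (· <:+: S)) a List.nil_infix).1

lemma repSub_infix {A : Type*} [DecidableEq A] (S a : List A) : repSub S a <:+: S :=
  (longestSuffixP_spec (p := (· <:+: S)) a List.nil_infix).2

lemma suffix_repSub {A : Type*} [DecidableEq A] {S a t : List A} (h1 : t <:+ a)
    (h2 : t <:+: S) : t <:+ repSub S a :=
  suffix_longestSuffixP _ a t h1 h2

lemma jBDM_eq {A : Type*} [DecidableEq A] {S : List A} {m : ℕ} {a : List A}
    (ha : a.length = m) : jBDM S m a = (repSub S a).length := by
  set r := repSub S a with hr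
  have hrs : r <:+ a := repSub_suffix S a
  have hri : r <:+: S := repSub_infix S a
  have hrlen : r.length ≤ m := ha ▸ hrs.length_le
  have hmemE : r.length ∈ {j : ℕ | j ≤ m ∧ a.drop (m - j) <:+: S} := by
    refine ⟨hrlen, ?_⟩
    rw [← ha, suffix_drop_eq hrs]
    exact hri
  have hub : ∀ j ∈ {j : ℕ | j ≤ m ∧ a.drop (m - j) <:+: S}, j ≤ r.length := by
    rintro j ⟨hjm, hji⟩
    have hlen : (a.drop (m - j)).length = j := by
      rw [List.length_drop, ha]; omega
    have h2 := (suffix_repSub (List.drop_suffix _ a) hji).length_le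
    rw [← hr] at h2
    omega
  exact le_antisymm (csSup_le ⟨_, hmemE⟩ hub) (le_csSup ⟨r.length, hub⟩ hmemE)

lemma IBDM_subset {A : Type*} [DecidableEq A] {S : List A} {m : ℕ} {a a' : List A}
    (ha : a.length = m) (ha' : a'.length = m) (hrep : repSub S a = repSub S a') :
    IBDM S m a ⊆ IBDM S m a' := by
  rintro i ⟨him, hpre⟩
  have hilen : (a.drop (m - i)).length = i := by rw [List.length_drop, ha]; omega
  have hsuf : a.drop (m - i) <:+ repSub S a :=
    suffix_repSub (List.drop_suffix _ a) hpre.isInfix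
  have hsuf' : a.drop (m - i) <:+ a' := (hrep ▸ hsuf).trans (repSub_suffix S a')
  have h2 : a'.drop (m - i) = a.drop (m - i) := by
    refine suffix_eq_of_length (List.drop_suffix _ a') hsuf' ?_
    rw [hilen, List.length_drop, ha']; omega
  exact ⟨him, h2 ▸ hpre⟩

lemma eq_S_of_repSub {A : Type*} [DecidableEq A] {S : List A} {m : ℕ} {a a' : List A}
    (ha : a.length = m) (ha' : a'.length = m) (hrep : repSub S a = repSub S a')
    (h : a = S) : a' = S := by
  have hinf : a <:+: S := by rw [h]
  have hlen : a.length ≤ (repSub S a).length :=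
    (suffix_repSub List.suffix_rfl hinf).length_le
  have h1 : repSub S a = a := suffix_eq_of_length (repSub_suffix S a) List.suffix_rfl
    (le_antisymm (repSub_suffix S a).length_le hlen)
  have h2 : a <:+ a' := by rw [← h1, hrep]; exact repSub_suffix S a'
  have h3 : a = a' := List.IsSuffix.eq_of_length h2 (by omega)
  exact h3 ▸ h

/-- Let `S ∈ Σ^m` and let `a, a' ∈ Σ^m` satisfy
`rep_{subcl(S)}(a) = rep_{subcl(S)}(a')`. Then `f_BDM(a) = f_BDM(a')` and
`g_BDM(a) = g_BDM(a')`. -/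
theorem subcl_compatible_BDM {A : Type*} [Fintype A] [DecidableEq A] [Nonempty A]
    (m : ℕ) (hm : 1 ≤ m) (S : List A) (hS : S.length = m)
    (a a' : List A) (ha : a.length = m) (ha' : a'.length = m)
    (hrep : repSub S a = repSub S a') :
    fBDM S m a = fBDM S m a' ∧ gBDM S m a = gBDM S m a' := by
  have hIB : IBDM S m a = IBDM S m a' :=
    le_antisymm (IBDM_subset ha ha' hrep) (IBDM_subset ha' ha hrep.symm)
  have heq : a = S ↔ a' = S := by
    constructor
    · exact eq_S_of_repSub ha ha' hrep
    · exact eq_S_of_repSub ha' ha hrep.symm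
  constructor
  · unfold fBDM
    by_cases h : a = S
    · simp [h, heq.mp h]
    · rw [if_neg h, if_neg (fun h' => h (heq.mpr h')), jBDM_eq ha, jBDM_eq ha', hrep]
  · unfold gBDM
    rw [hIB]
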